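/- Let G be a transitive permutation group on a finite set Ω, and suppose Δ ⊆ Ω with |Δ| > |Ω|/2, and H ≤ G fixes every point of Ω∖Δ pointwise and acts pre-primitively (in particular transitively) on Δ. Then G is pre-primitive. -/

import Mathlib

open Equiv

variable {Ω : Type*}

/-- `G` is a transitive permutation group on `Ω`. -/
def IsTransitive (G : Subgroup (Perm Ω)) : Prop :=
  ∀ x y : Ω, ∃ g ∈ G, g x = y

/-- The partition (setoid) `r` of `Ω` is `G`-invariant. -/
def IsInvariantPartition (G : Subgroup (Perm Ω)) (r : Setoid Ω) : Prop :=
  ∀ g ∈ G, ∀ x y : Ω, r.r x y → r.r (g x) (g y)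

/-- The partition `r` of `Ω` is the orbit partition of the permutation group `H`. -/
def IsOrbitPartition (H : Subgroup (Perm Ω)) (r : Setoid Ω) : Prop :=
  ∀ x y : Ω, r.r x y ↔ ∃ h ∈ H, h x = y

/-- `G` is pre-primitive: every `G`-invariant partition is the orbit partition
of a subgroup of `G`. -/
def IsPrePrimitive (G : Subgroup (Perm Ω)) : Prop :=
  ∀ r : Setoid Ω, IsInvariantPartition G r → ∃ H ≤ G, IsOrbitPartition H r

/-- `N` is a normal subgroup of the permutation group `G`. -/
def IsNormalIn (N G : Subgroup (Perm Ω)) : Prop :=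
  N ≤ G ∧ ∀ g ∈ G, ∀ n ∈ N, g * n * g⁻¹ ∈ N

/-- The class of `x` in the partition `r`. -/
def cls (r : Setoid Ω) (x : Ω) : Set Ω := {y | r.r x y}

lemma mem_cls {r : Setoid Ω} {x y : Ω} : y ∈ cls r x ↔ r.r x y := Iff.rfl

/-- The subgroup of elements of `G` preserving every class of `r`. -/
def blockKernel (G : Subgroup (Perm Ω)) (r : Setoid Ω) : Subgroup (Perm Ω) where
  carrier := {σ | σ ∈ G ∧ ∀ x, r.r x (σ x)}
  one_mem' := ⟨G.one_mem, fun x => r.iseqv.refl x⟩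
  mul_mem' := fun {a b} ha hb =>
    ⟨G.mul_mem ha.1 hb.1, fun x => r.iseqv.trans (hb.2 x) (ha.2 (b x))⟩
  inv_mem' := fun {a} ha =>
    ⟨G.inv_mem ha.1, fun x => r.iseqv.symm (by simpa using ha.2 (a⁻¹ x))⟩

lemma mem_blockKernel {G : Subgroup (Perm Ω)} {r : Setoid Ω} {σ : Perm Ω} :
    σ ∈ blockKernel G r ↔ σ ∈ G ∧ ∀ x, r.r x (σ x) := Iff.rfl


/-- A Jordan-type theorem for pre-primitivity. -/
theorem preprimitive_of_large_preprimitive_subgroup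
    {Ω : Type*} [Fintype Ω] (G : Subgroup (Perm Ω)) (hG : IsTransitive G)
    (Δ : Set Ω) (hcard : Fintype.card Ω < 2 * Δ.ncard)
    (H : Subgroup (Perm Ω)) (hHG : H ≤ G)
    (hfix : ∀ h ∈ H, ∀ x ∉ Δ, h x = x)
    (htransΔ : ∀ x ∈ Δ, ∀ y ∈ Δ, ∃ h ∈ H, h x = y)
    (hppΔ : ∀ r : Setoid Δ,
      (∀ h ∈ H, ∀ x y : Δ, ∀ (hx : h (x : Ω) ∈ Δ) (hy : h (y : Ω) ∈ Δ),
        r.r x y → r.r ⟨h (x : Ω), hx⟩ ⟨h (y : Ω), hy⟩) →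
      ∃ K ≤ H, ∀ x y : Δ, r.r x y ↔ ∃ k ∈ K, k (x : Ω) = (y : Ω)) :
    IsPrePrimitive G := by
  classical
  intro r hr
  -- Δ is nonempty
  have hΔne : Δ.Nonempty := by
    rcases Δ.eq_empty_or_nonempty with h | h
    · rw [h] at hcard; simp at hcard
    · exact h
  obtain ⟨u₀, hu₀⟩ := hΔne
  -- H preserves Δ
  have hHΔ : ∀ h ∈ H, ∀ x ∈ Δ, h x ∈ Δ := by
    intro h hh x hx
    by_contra hcon
    have h1 := hfix h⁻¹ (H.inv_mem hh) (h x) hcon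
    rw [Perm.coe_inv, symm_apply_apply] at h1
    exact hcon (h1 ▸ hx)
  -- trace setoid on Δ
  set r' : Setoid Δ := ⟨fun a b => r.r a b,
    ⟨fun a => r.iseqv.refl a, fun h => r.iseqv.symm h, fun h1 h2 => r.iseqv.trans h1 h2⟩⟩
    with hr'def
  obtain ⟨K, hKH, hK⟩ := hppΔ r' (by
    intro h hh x y hx hy hxy
    exact hr h (hHG hh) x y hxy)
  -- K moves points within their r-class
  have hKr : ∀ k ∈ K, ∀ x, r.r x (k x) := by
    intro k hk x
    by_cases hx : x ∈ Δ
    · exact (hK ⟨x, hx⟩ ⟨k x, hHΔ k (hKH hk) x hx⟩).mpr ⟨k, hk, rfl⟩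
    · rw [hfix k (hKH hk) x hx]
  have hKS : ∀ k ∈ K, k ∈ blockKernel G r := fun k hk => ⟨hHG (hKH hk), hKr k hk⟩
  -- blockKernel is closed under conjugation by G
  have hSconj : ∀ g ∈ G, ∀ s ∈ blockKernel G r, g * s * g⁻¹ ∈ blockKernel G r := by
    intro g hg s hs
    refine ⟨G.mul_mem (G.mul_mem hg hs.1) (G.inv_mem hg), fun x => ?_⟩
    have h2 := hr g hg _ _ (hs.2 (g⁻¹ x))
    simpa [Perm.mul_apply] using h2
  -- classes of r-related points coincide
  have hclseq : ∀ x y, r.r x y → cls r x = cls r y := by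
    intro x y hxy
    ext z
    exact ⟨fun h => r.iseqv.trans (r.iseqv.symm hxy) h, fun h => r.iseqv.trans hxy h⟩
  -- image of a class under g ∈ G
  have hclsimg : ∀ g ∈ G, ∀ x, (⇑g) '' cls r x = cls r (g x) := by
    intro g hg x
    ext z
    simp only [Set.mem_image, mem_cls]
    constructor
    · rintro ⟨w, hw, rfl⟩; exact hr g hg x w hw
    · intro hz
      refine ⟨g⁻¹ z, ?_, by simp⟩
      have := hr g⁻¹ (G.inv_mem hg) (g x) z hz
      simpa using this
  -- all classes have the same size
  have hd : ∀ x y, (cls r x).ncard = (cls r y).ncard := by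
    intro x y
    obtain ⟨g, hg, hgxy⟩ := hG x y
    rw [← hgxy, ← hclsimg g hg x, Set.ncard_image_of_injective _ g.injective]
  -- H maps Δ onto Δ
  have hHΔim : ∀ h ∈ H, (⇑h) '' Δ = Δ := by
    intro h hh
    apply Set.Subset.antisymm
    · rintro _ ⟨x, hx, rfl⟩; exact hHΔ h hh x hx
    · intro x hx
      exact ⟨h⁻¹ x, hHΔ h⁻¹ (H.inv_mem hh) x hx, by simp⟩
  -- all trace classes have the same size
  have he : ∀ x ∈ Δ, ∀ y ∈ Δ, (cls r x ∩ Δ).ncard = (cls r y ∩ Δ).ncard := by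
    intro x hx y hy
    obtain ⟨h, hh, hhxy⟩ := htransΔ x hx y hy
    have himg : (⇑h) '' (cls r x ∩ Δ) = cls r y ∩ Δ := by
      rw [Set.image_inter h.injective, hclsimg h (hHG hh) x, hhxy, hHΔim h hh]
    rw [← himg, Set.ncard_image_of_injective _ h.injective]
  set e := (cls r u₀ ∩ Δ).ncard with hedef
  have he0 : 0 < e := by
    rw [hedef]
    exact (Set.ncard_pos (Set.toFinite _)).mpr ⟨u₀, r.iseqv.refl u₀, hu₀⟩
  have hecard : ∀ z : Ω, (cls r z ∩ Δ).ncard ≤ e := by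
    intro z
    rcases (cls r z ∩ Δ).eq_empty_or_nonempty with h | ⟨x, hx⟩
    · rw [h, Set.ncard_empty]; exact Nat.zero_le _
    · rw [hclseq z x hx.1]
      exact le_of_eq (he x hx.2 u₀ hu₀)
  -- double counting
  have hcount : Δ.ncard * (cls r u₀).ncard ≤ Fintype.card Ω * e := by
    have hstep1 : ∀ x : Ω, (cls r x).ncard =
        ∑ z : Ω, (if r.r x z then 1 else 0) := by
      intro x
      rw [Set.ncard_eq_toFinset_card']
      rw [← Finset.card_filter]
      congr 1
      ext z
      simp [mem_cls]
    have hstep2 : ∀ z : Ω, (∑ x ∈ Δ.toFinset, (if r.r x z then 1 else 0)) =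
        (cls r z ∩ Δ).ncard := by
      intro z
      rw [Set.ncard_eq_toFinset_card']
      rw [← Finset.card_filter]
      congr 1
      ext x
      simp only [Finset.mem_filter, Set.mem_toFinset, Set.mem_inter_iff, mem_cls]
      constructor
      · rintro ⟨h1, h2⟩; exact ⟨r.iseqv.symm h2, h1⟩
      · rintro ⟨h1, h2⟩; exact ⟨h2, r.iseqv.symm h1⟩
    calc Δ.ncard * (cls r u₀).ncard
        = ∑ x ∈ Δ.toFinset, (cls r x).ncard := by
          rw [Finset.sum_congr rfl (fun x _ => hd x u₀), Finset.sum_const,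
            Set.ncard_eq_toFinset_card', smul_eq_mul]
      _ = ∑ x ∈ Δ.toFinset, ∑ z : Ω, (if r.r x z then 1 else 0) :=
          Finset.sum_congr rfl (fun x _ => hstep1 x)
      _ = ∑ z : Ω, ∑ x ∈ Δ.toFinset, (if r.r x z then 1 else 0) := Finset.sum_comm
      _ = ∑ z : Ω, (cls r z ∩ Δ).ncard := Finset.sum_congr rfl (fun z _ => hstep2 z)
      _ ≤ ∑ _z : Ω, e := Finset.sum_le_sum (fun z _ => hecard z)
      _ = Fintype.card Ω * e := by rw [Finset.sum_const, smul_eq_mul, Finset.card_univ]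
  -- block size is less than twice the trace class size
  have hde : (cls r u₀).ncard < 2 * e := by
    have h1 : Δ.ncard * (cls r u₀).ncard < Δ.ncard * (2 * e) := by
      calc Δ.ncard * (cls r u₀).ncard ≤ Fintype.card Ω * e := hcount
        _ < (2 * Δ.ncard) * e := mul_lt_mul_of_pos_right hcard he0
        _ = Δ.ncard * (2 * e) := by ring
    exact Nat.lt_of_mul_lt_mul_left h1
  -- every point lies in an "edge": an e-subset of its class on which
  -- the blockKernel acts transitively
  have hedge : ∀ x : Ω, ∃ E : Set Ω, x ∈ E ∧ E ⊆ cls r x ∧ E.ncard = e ∧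
      ∀ p ∈ E, ∀ q ∈ E, ∃ σ ∈ blockKernel G r, σ p = q := by
    intro x
    obtain ⟨g, hg, hgx⟩ := hG u₀ x
    refine ⟨(⇑g) '' (cls r u₀ ∩ Δ), ⟨u₀, ⟨r.iseqv.refl u₀, hu₀⟩, hgx⟩, ?_, ?_, ?_⟩
    · intro p hp
      obtain ⟨w, hw, rfl⟩ := hp
      have hmem : g w ∈ cls r (g u₀) := (hclsimg g hg u₀) ▸ ⟨w, hw.1, rfl⟩
      rwa [hgx] at hmem
    · rw [Set.ncard_image_of_injective _ g.injective, hedef]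
    · rintro p ⟨a, ha, rfl⟩ q ⟨b, hb, rfl⟩
      have hrab : r.r a b := r.iseqv.trans (r.iseqv.symm ha.1) hb.1
      obtain ⟨k, hk, hkab⟩ := (hK ⟨a, ha.2⟩ ⟨b, hb.2⟩).mp hrab
      refine ⟨g * k * g⁻¹, hSconj g hg k (hKS k hk), ?_⟩
      show g (k (g⁻¹ (g a))) = g b
      rw [Perm.coe_inv, symm_apply_apply, hkab]
  -- conclude
  refine ⟨blockKernel G r, fun σ hσ => hσ.1, ?_⟩
  intro x y
  constructor
  · intro hxy
    obtain ⟨E₁, hxE₁, hE₁cls, hE₁card, hE₁orb⟩ := hedge x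
    obtain ⟨E₂, hyE₂, hE₂cls, hE₂card, hE₂orb⟩ := hedge y
    have hE₂cls' : E₂ ⊆ cls r x := (hclseq x y hxy) ▸ hE₂cls
    have hne : (E₁ ∩ E₂).Nonempty := by
      by_contra hcon
      rw [Set.not_nonempty_iff_eq_empty] at hcon
      have hdisj : Disjoint E₁ E₂ := Set.disjoint_iff_inter_eq_empty.mpr hcon
      have hsub : E₁ ∪ E₂ ⊆ cls r x := Set.union_subset hE₁cls hE₂cls'
      have h1 : (E₁ ∪ E₂).ncard = 2 * e := by
        rw [Set.ncard_union_eq hdisj (Set.toFinite _) (Set.toFinite _),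
          hE₁card, hE₂card]
        ring
      have h2 := Set.ncard_le_ncard hsub (Set.toFinite _)
      rw [h1] at h2
      have h3 := hd x u₀
      omega
    obtain ⟨w, hw₁, hw₂⟩ := hne
    obtain ⟨σ₁, hσ₁, hσ₁x⟩ := hE₁orb x hxE₁ w hw₁
    obtain ⟨σ₂, hσ₂, hσ₂w⟩ := hE₂orb y hyE₂ w hw₂
    refine ⟨σ₂⁻¹ * σ₁, (blockKernel G r).mul_mem ((blockKernel G r).inv_mem hσ₂) hσ₁, ?_⟩
    show σ₂⁻¹ (σ₁ x) = y
    rw [hσ₁x, ← hσ₂w, Perm.coe_inv, symm_apply_apply]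
  · rintro ⟨σ, hσ, rfl⟩
    exact hσ.2 x
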